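/- Let A be an n×n integer matrix with |det A| ≥ 2. Then there exists a constant C depending only on n such that #(ℤⁿ ∩ A^j(B(0,r))) ≤ C · max(1, rⁿ) · max(1, |det A|^j) for all j ∈ ℤ and r > 0. -/

import Mathlib

open MeasureTheory
open scoped ENNReal

namespace S12
variable {n : ℕ}

def ι (k : Fin n → ℤ) : EuclideanSpace ℝ (Fin n) := WithLp.toLp 2 (fun i => (k i : ℝ))

def L (n : ℕ) : Set (EuclideanSpace ℝ (Fin n)) := {x | ∀ i, ∃ m : ℤ, x i = (m : ℝ)}

lemma ι_apply (k : Fin n → ℤ) (i : Fin n) : ι k i = (k i : ℝ) := rfl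

lemma ι_inj : Function.Injective (ι (n := n)) := by
  intro k k' h
  funext i
  have := congrFun (congrArg WithLp.ofLp h) i
  rw [ι_apply, ι_apply] at this
  exact_mod_cast this

lemma ι_sub (k k' : Fin n → ℤ) : ι (k - k') = ι k - ι k' := by
  ext i
  simp [ι]

noncomputable def iv (x : EuclideanSpace ℝ (Fin n)) : Fin n → ℤ := fun i => ⌊x i⌋

lemma ι_iv {x : EuclideanSpace ℝ (Fin n)} (hx : x ∈ L n) : ι (iv x) = x := by
  ext i
  obtain ⟨m, hm⟩ := hx i
  rw [ι_apply, iv, hm]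
  norm_num

lemma coord_abs_le_dist (x y : EuclideanSpace ℝ (Fin n)) (i : Fin n) :
    |x i - y i| ≤ dist x y := by
  rw [EuclideanSpace.dist_eq]
  rw [show |x i - y i| = Real.sqrt (dist (x i) (y i) ^ 2) by
    rw [Real.sqrt_sq_eq_abs, Real.dist_eq, abs_abs]]
  apply Real.sqrt_le_sqrt
  exact Finset.single_le_sum (f := fun j => dist (x j) (y j) ^ 2)
    (fun j _ => sq_nonneg _) (Finset.mem_univ i)

lemma encard_biUnion_le {α β : Type*} (F : Finset α) (s : α → Set β) :
    (⋃ i ∈ F, s i).encard ≤ ∑ i ∈ F, (s i).encard := by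
  classical
  induction F using Finset.induction with
  | empty => simp
  | insert _ _ h ih =>
    rw [Finset.set_biUnion_insert, Finset.sum_insert h]
    exact le_trans (Set.encard_union_le _ _) (add_le_add le_rfl ih)

lemma encard_cast_le {β : Type*} {s : Set β} {N : ℕ} {c : ℝ}
    (h1 : s.encard ≤ (N : ℕ∞)) (h2 : (N : ℝ) ≤ c) :
    (s.encard : ℝ≥0∞) ≤ ENNReal.ofReal c := by
  calc (s.encard : ℝ≥0∞) ≤ ((N : ℕ∞) : ℝ≥0∞) := by exact_mod_cast h1
    _ = (N : ℝ≥0∞) := by simp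
    _ = ENNReal.ofReal (N : ℝ) := (ENNReal.ofReal_natCast N).symm
    _ ≤ _ := ENNReal.ofReal_le_ofReal h2

lemma ball_count (c : EuclideanSpace ℝ (Fin n)) {r : ℝ} (hr : 0 < r) :
    ∃ N : ℕ, (L n ∩ Metric.ball c r).encard ≤ (N : ℕ∞) ∧ (N : ℝ) ≤ (2*r+2)^n := by
  classical
  set F : Finset (Fin n → ℤ) :=
    Fintype.piFinset fun i => Finset.Icc ⌈c i - r⌉ ⌊c i + r⌋ with hF
  refine ⟨F.card, ?_, ?_⟩
  · have hsub : L n ∩ Metric.ball c r ⊆ ι '' ↑F := by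
      rintro x ⟨hxL, hxB⟩
      have hk : ∀ i, x i = ((hxL i).choose : ℝ) := fun i => (hxL i).choose_spec
      set k : Fin n → ℤ := fun i => (hxL i).choose with hkdef
      refine ⟨k, ?_, by ext i; rw [ι_apply, ← hk i]⟩
      simp only [hF, Fintype.mem_piFinset, Finset.mem_coe, Finset.mem_Icc]
      intro i
      have hd : |x i - c i| ≤ dist x c := coord_abs_le_dist x c i
      have hlt : dist x c < r := Metric.mem_ball.mp hxB
      have h1 : c i - r ≤ (k i : ℝ) := by
        rw [← hk i]; have := abs_le.mp (hd.trans hlt.le); linarith [this.1]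
      have h2 : (k i : ℝ) ≤ c i + r := by
        rw [← hk i]; have := abs_le.mp (hd.trans hlt.le); linarith [this.2]
      exact ⟨Int.ceil_le.mpr h1, Int.le_floor.mpr h2⟩
    calc (L n ∩ Metric.ball c r).encard ≤ (ι '' ↑F).encard := Set.encard_mono hsub
      _ ≤ (↑F : Set (Fin n → ℤ)).encard := Set.encard_image_le _ _
      _ = F.card := Set.encard_coe_eq_coe_finsetCard F
  · rw [hF, Fintype.card_piFinset]
    push_cast
    have hstep : ∀ i : Fin n, ((Finset.Icc ⌈c i - r⌉ ⌊c i + r⌋).card : ℝ) ≤ 2*r+2 := by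
      intro i
      rw [Int.card_Icc]
      rcases le_or_gt (⌊c i + r⌋ + 1 - ⌈c i - r⌉) 0 with h | h
      · rw [Int.toNat_of_nonpos h]
        norm_num
        linarith
      · rw [show (((⌊c i + r⌋ + 1 - ⌈c i - r⌉).toNat : ℕ) : ℝ)
            = (((⌊c i + r⌋ + 1 - ⌈c i - r⌉).toNat : ℤ) : ℝ) by push_cast; ring,
          Int.toNat_of_nonneg h.le]
        push_cast
        have h1 : (⌊c i + r⌋ : ℝ) ≤ c i + r := Int.floor_le _
        have h2 : c i - r ≤ (⌈c i - r⌉ : ℝ) := Int.le_ceil _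
        linarith
    calc (∏ i : Fin n, ((Finset.Icc ⌈c i - r⌉ ⌊c i + r⌋).card : ℝ))
        ≤ ∏ _i : Fin n, (2*r+2) :=
          Finset.prod_le_prod (fun i _ => by positivity) (fun i _ => hstep i)
      _ = (2*r+2)^n := by rw [Finset.prod_const]; simp

noncomputable def Mat (T : EuclideanSpace ℝ (Fin n) ≃ₗ[ℝ] EuclideanSpace ℝ (Fin n))
    (hT : ∀ k : Fin n → ℤ, ∃ m : Fin n → ℤ, T (ι k) = ι m) : Matrix (Fin n) (Fin n) ℤ :=
  Matrix.of fun i k => (hT (Pi.single k 1)).choose i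

lemma ι_decomp (k : Fin n → ℤ) :
    ι k = ∑ j : Fin n, (k j : ℝ) • ι (Pi.single j 1) := by
  ext i
  rw [show (∑ j : Fin n, (k j : ℝ) • ι (Pi.single j 1)) i
      = ∑ j : Fin n, (k j : ℝ) * ι (Pi.single j 1) i from by
    rw [WithLp.ofLp_sum, Finset.sum_apply]; rfl]
  simp only [ι_apply, Pi.single_apply]
  push_cast
  simp [Finset.sum_ite_eq']

lemma T_ι (T : EuclideanSpace ℝ (Fin n) ≃ₗ[ℝ] EuclideanSpace ℝ (Fin n))
    (hT : ∀ k : Fin n → ℤ, ∃ m : Fin n → ℤ, T (ι k) = ι m) (k : Fin n → ℤ) :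
    T (ι k) = ι ((Mat T hT).mulVec k) := by
  have hcol : ∀ j, T (ι (Pi.single j 1)) = ι ((hT (Pi.single j 1)).choose) :=
    fun j => (hT (Pi.single j 1)).choose_spec
  rw [ι_decomp k, map_sum]
  rw [Finset.sum_congr rfl (fun j _ => by
      rw [_root_.map_smul]; exact congrArg (fun y => (k j : ℝ) • y) (hcol j) :
    ∀ j ∈ Finset.univ, T ((k j : ℝ) • ι (Pi.single j 1))
      = (k j : ℝ) • ι ((hT (Pi.single j 1)).choose))]
  ext i
  rw [show (∑ j : Fin n, (k j : ℝ) • ι ((hT (Pi.single j 1)).choose)) i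
      = ∑ j : Fin n, (k j : ℝ) * ((hT (Pi.single j 1)).choose i : ℝ) from by
    rw [WithLp.ofLp_sum, Finset.sum_apply]; rfl]
  rw [ι_apply, Matrix.mulVec, dotProduct]
  push_cast
  apply Finset.sum_congr rfl
  intro j _
  rw [Mat]
  simp [mul_comm]

lemma det_T (T : EuclideanSpace ℝ (Fin n) ≃ₗ[ℝ] EuclideanSpace ℝ (Fin n))
    (hT : ∀ k : Fin n → ℤ, ∃ m : Fin n → ℤ, T (ι k) = ι m) :
    LinearMap.det T.toLinearMap = ((Mat T hT).det : ℝ) := by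
  classical
  let e := WithLp.linearEquiv 2 ℝ (Fin n → ℝ)
  let b : Module.Basis (Fin n) ℝ (EuclideanSpace ℝ (Fin n)) :=
    (Pi.basisFun ℝ (Fin n)).map e.symm
  rw [← LinearMap.det_toMatrix b]
  have hb : ∀ k, b k = ι (Pi.single k 1) := by
    intro k
    ext i
    simp only [b, Module.Basis.map_apply, Pi.basisFun_apply, ι_apply, Pi.single_apply]
    simp [e, WithLp.linearEquiv, Pi.single_apply]
  have hmat : LinearMap.toMatrix b b T.toLinearMap
      = (Mat T hT).map (Int.cast : ℤ → ℝ) := by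
    ext i k
    rw [LinearMap.toMatrix_apply]
    have : T.toLinearMap (b k) = ι ((Mat T hT).mulVec (Pi.single k 1)) := by
      rw [hb k]; exact T_ι T hT _
    rw [this]
    have hrepr : ∀ x : EuclideanSpace ℝ (Fin n), b.repr x i = x i := by
      intro x
      simp [b, Module.Basis.map_repr, e]
    rw [hrepr, ι_apply]
    simp [Matrix.mulVec, dotProduct, Pi.single_apply, Mat]
  rw [hmat]
  rw [show (Mat T hT).map (Int.cast : ℤ → ℝ)
      = (Int.castRingHom ℝ).mapMatrix (Mat T hT) from rfl, ← RingHom.map_det]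
  rfl

set_option maxHeartbeats 800000 in
lemma snf_data (B : (Fin n → ℤ) →ₗ[ℤ] (Fin n → ℤ)) (hinj : Function.Injective B) :
    ∃ (bM : Module.Basis (Fin n) ℤ (Fin n → ℤ)) (e : Fin n ≃ Fin n) (a : Fin n → ℤ)
      (bN : Module.Basis (Fin n) ℤ (LinearMap.range B)),
      (∀ i, (bN i : Fin n → ℤ) = a i • bM (e i)) ∧ (∀ i, a i ≠ 0) ∧
      (∏ i, (a i).natAbs) = (LinearMap.det B).natAbs := by
  classical
  set N := LinearMap.range B with hN
  obtain ⟨m', bM, bN, f, a, hsnf⟩ := N.smithNormalForm (Pi.basisFun ℤ (Fin n))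
  have hrank : n = m' := by
    have h1 : Module.finrank ℤ N = m' := (Module.finrank_eq_card_basis bN).trans (by simp)
    have h2 : Module.finrank ℤ N = n := by
      have : (Fin n → ℤ) ≃ₗ[ℤ] N := LinearEquiv.ofInjective B hinj
      rw [← this.finrank_eq]
      simp
    omega
  subst hrank
  have hfbij : Function.Bijective f := (Finite.injective_iff_bijective).mp f.injective
  set e : Fin n ≃ Fin n := Equiv.ofBijective f hfbij with he
  have hea : ∀ i, (bN i : Fin n → ℤ) = a i • bM (e i) := fun i => hsnf i
  have ha0 : ∀ i, a i ≠ 0 := by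
    intro i hai
    have : (bN i : Fin n → ℤ) = 0 := by rw [hea i, hai, zero_smul]
    exact bN.ne_zero i (by exact_mod_cast Subtype.coe_injective (this.trans rfl))
  refine ⟨bM, e, a, bN, hea, ha0, ?_⟩
  have hψ : ∃ ψ : (Fin n → ℤ) ≃ₗ[ℤ] N, B = N.subtype ∘ₗ (ψ : (Fin n → ℤ) →ₗ[ℤ] N) := by
    refine ⟨LinearEquiv.ofInjective B hinj, ?_⟩
    ext x
    rfl
  obtain ⟨ψ, hψeq⟩ := hψ
  have hdet : LinearMap.det B
      = (LinearMap.toMatrix bN bM N.subtype).det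
        * (LinearMap.toMatrix bM bN (ψ : (Fin n → ℤ) →ₗ[ℤ] N)).det := by
    rw [← LinearMap.det_toMatrix bM B, hψeq, LinearMap.toMatrix_comp bM bN bM, Matrix.det_mul]
  have hD : (LinearMap.toMatrix bN bM N.subtype).det.natAbs = ∏ i, (a i).natAbs := by
    set D := LinearMap.toMatrix bN bM N.subtype with hDdef
    have hDe : ∀ i j, D.submatrix e id i j = Matrix.diagonal a i j := by
      intro i j
      simp only [Matrix.submatrix_apply, id_eq, hDdef, LinearMap.toMatrix_apply,
        Submodule.coe_subtype, Matrix.diagonal]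
      rw [hea j, _root_.map_smul]
      simp only [Module.Basis.repr_self, Finsupp.smul_single, smul_eq_mul, mul_one,
        Finsupp.single_apply, Matrix.of_apply]
      rcases eq_or_ne i j with h | h
      · subst h; simp
      · rw [if_neg (fun hc => h (e.injective hc).symm), if_neg h]
    have hsub := Matrix.det_permute e D
    have hfun : D.submatrix ⇑e id = Matrix.diagonal a := by
      ext i j
      exact hDe i j
    rw [hfun, Matrix.det_diagonal] at hsub
    have := congrArg Int.natAbs hsub
    simp only [Int.cast_id, Int.natAbs_mul, Int.units_natAbs, one_mul] at this
    calc D.det.natAbs = (∏ i, a i).natAbs := this.symm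
      _ = ∏ i, (a i).natAbs := map_prod Int.natAbsHom a Finset.univ
  have hU : (LinearMap.toMatrix bM bN (ψ : (Fin n → ℤ) →ₗ[ℤ] N)).det.natAbs = 1 := by
    have : IsUnit (LinearMap.toMatrix bM bN (ψ : (Fin n → ℤ) →ₗ[ℤ] N)).det :=
      LinearEquiv.isUnit_det ψ bM bN
    rcases Int.isUnit_iff.mp this with h | h <;> simp [h]
  rw [hdet, Int.natAbs_mul, hD, hU, mul_one]

lemma box_count (T : EuclideanSpace ℝ (Fin n) ≃ₗ[ℝ] EuclideanSpace ℝ (Fin n))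
    (hT : ∀ k : Fin n → ℤ, ∃ m : Fin n → ℤ, T (ι k) = ι m) (m : Fin n → ℤ) :
    {x | x ∈ L n ∧ ∀ i, (m i : ℝ) ≤ T.symm x i ∧ T.symm x i < m i + 1}.encard
      ≤ (((Mat T hT).det.natAbs : ℕ) : ℕ∞) := by
  classical
  set S := {x | x ∈ L n ∧ ∀ i, (m i : ℝ) ≤ T.symm x i ∧ T.symm x i < m i + 1} with hS
  set B : (Fin n → ℤ) →ₗ[ℤ] (Fin n → ℤ) := Matrix.toLin' (Mat T hT) with hB
  have hBapp : ∀ k, ι (B k) = T (ι k) := by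
    intro k
    rw [T_ι T hT k, hB, Matrix.toLin'_apply]
  have hinj : Function.Injective B := by
    intro k k' h
    apply ι_inj
    apply T.injective
    rw [← hBapp, ← hBapp, h]
  obtain ⟨bM, e, a, bN, hsnf, ha0, hprod⟩ := snf_data B hinj
  haveI : ∀ i, NeZero (a i).natAbs := fun i => ⟨Int.natAbs_ne_zero.mpr (ha0 i)⟩
  set g : EuclideanSpace ℝ (Fin n) → (∀ i : Fin n, ZMod (a i).natAbs) :=
    fun x j => ((bM.repr (iv x) (e j) : ℤ) : ZMod (a j).natAbs) with hg
  have hginj : Set.InjOn g S := by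
    intro x hx x' hx' hgg
    set k := iv x
    set k' := iv x'
    have hk : ι k = x := ι_iv hx.1
    have hk' : ι k' = x' := ι_iv hx'.1
    have hdvd : ∀ j, a j ∣ bM.repr (k - k') (e j) := by
      intro j
      have := congrFun hgg j
      rw [hg] at this
      have h2' := ((ZMod.intCast_eq_intCast_iff _ _ _).mp this).dvd
      have h2 : ((a j).natAbs : ℤ) ∣ bM.repr k (e j) - bM.repr k' (e j) := by
        have := dvd_neg.mpr h2'
        rwa [neg_sub] at this
      rw [Int.natAbs_dvd] at h2
      simpa [map_sub] using h2
    have hmem : k - k' ∈ LinearMap.range B := by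
      choose c hc using hdvd
      have hrepr : k - k' = ∑ j : Fin n, (bM.repr (k - k') (e j)) • bM (e j) := by
        rw [Equiv.sum_comp e (fun i => (bM.repr (k - k') i) • bM i)]
        exact (bM.sum_repr (k - k')).symm
      rw [hrepr]
      apply Submodule.sum_mem
      intro j _
      rw [hc j, mul_comm, mul_smul]
      exact Submodule.smul_mem _ _ (by rw [← hsnf j]; exact (bN j).2)
    obtain ⟨u, hu⟩ := hmem
    have hxx : x - x' = T (ι u) := by
      rw [← hBapp, hu, ι_sub, hk, hk']
    have hcoord : ∀ i, T.symm x i - T.symm x' i = (u i : ℝ) := by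
      intro i
      have : T.symm (x - x') = ι u := by rw [hxx, LinearEquiv.symm_apply_apply]
      have h2 := congrFun (congrArg
        (fun (v : EuclideanSpace ℝ (Fin n)) => v.ofLp) this) i
      simpa [map_sub, ι_apply] using h2
    have hu0 : ∀ i, u i = 0 := by
      intro i
      have h1 := (hx.2 i).1
      have h2 := (hx.2 i).2
      have h3 := (hx'.2 i).1
      have h4 := (hx'.2 i).2
      have : |(u i : ℝ)| < 1 := by
        rw [← hcoord i, abs_lt]
        constructor <;> linarith
      exact_mod_cast (by exact_mod_cast abs_lt.mp this : -1 < u i ∧ u i < 1) |>.elim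
        fun hl hr => by omega
    apply T.symm.injective
    have : T.symm x - T.symm x' = 0 := by
      ext i
      rw [show ((T.symm x - T.symm x' : EuclideanSpace ℝ (Fin n)) i)
          = T.symm x i - T.symm x' i from rfl, hcoord i, hu0 i]
      norm_num
    exact sub_eq_zero.mp this
  calc S.encard = (g '' S).encard := (hginj.encard_image).symm
    _ ≤ (Set.univ : Set (∀ i : Fin n, ZMod (a i).natAbs)).encard :=
        Set.encard_mono (Set.subset_univ _)
    _ = (Fintype.card (∀ i : Fin n, ZMod (a i).natAbs) : ℕ∞) := by
        rw [Set.encard_univ, ENat.card_eq_coe_fintype_card]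
    _ = (((Mat T hT).det.natAbs : ℕ) : ℕ∞) := by
        congr 1
        rw [Fintype.card_pi]
        simp_rw [ZMod.card]
        rw [hprod, hB, LinearMap.det_toLin']

lemma Icc_card_le {r : ℝ} (hr : 0 < r) :
    ((Finset.Icc ⌊-r⌋ ⌊r⌋).card : ℝ) ≤ 2*r+2 := by
  rw [Int.card_Icc]
  rcases le_or_gt (⌊r⌋ + 1 - ⌊-r⌋) 0 with h | h
  · rw [Int.toNat_of_nonpos h]
    norm_num
    linarith
  · rw [show (((⌊r⌋ + 1 - ⌊-r⌋).toNat : ℕ) : ℝ) = (((⌊r⌋ + 1 - ⌊-r⌋).toNat : ℤ) : ℝ) by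
      push_cast; ring, Int.toNat_of_nonneg h.le]
    push_cast
    have h1 : (⌊r⌋ : ℝ) ≤ r := Int.floor_le _
    have h2 : -r - 1 < (⌊-r⌋ : ℝ) := by
      have := Int.lt_floor_add_one (-r)
      linarith [Int.floor_le (-r), (Int.sub_one_lt_floor (-r))]
    linarith

lemma image_ball_count (T : EuclideanSpace ℝ (Fin n) ≃ₗ[ℝ] EuclideanSpace ℝ (Fin n))
    (hT : ∀ k : Fin n → ℤ, ∃ m : Fin n → ℤ, T (ι k) = ι m) {r : ℝ} (hr : 0 < r) :
    ∃ N : ℕ, (L n ∩ T '' Metric.ball 0 r).encard ≤ (N : ℕ∞) ∧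
      (N : ℝ) ≤ (2*r+2)^n * ((Mat T hT).det.natAbs : ℝ) := by
  classical
  set Fm : Finset (Fin n → ℤ) := Fintype.piFinset fun _ => Finset.Icc ⌊-r⌋ ⌊r⌋ with hFm
  set D : ℕ := (Mat T hT).det.natAbs with hD
  refine ⟨Fm.card * D, ?_, ?_⟩
  · have hcover : L n ∩ T '' Metric.ball 0 r ⊆
        ⋃ m ∈ Fm, {x | x ∈ L n ∧ ∀ i, (m i : ℝ) ≤ T.symm x i ∧ T.symm x i < m i + 1} := by
      rintro x ⟨hxL, y, hy, rfl⟩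
      have hyx : T.symm (T y) = y := T.symm_apply_apply y
      refine Set.mem_biUnion (x := fun i => ⌊y i⌋) ?_ ?_
      · show (fun i => ⌊y i⌋) ∈ Fm
        rw [hFm, Fintype.mem_piFinset]
        intro i
        rw [Finset.mem_Icc]
        have hd : |y i - (0 : EuclideanSpace ℝ (Fin n)) i| ≤ dist y 0 := coord_abs_le_dist y 0 i
        have h0 : (0 : EuclideanSpace ℝ (Fin n)) i = 0 := rfl
        rw [h0, sub_zero] at hd
        have hlt : dist y 0 < r := Metric.mem_ball.mp hy
        have := abs_lt.mp (hd.trans_lt hlt)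
        exact ⟨Int.floor_le_floor this.1.le, Int.floor_le_floor this.2.le⟩
      · refine ⟨hxL, fun i => ?_⟩
        rw [hyx]
        exact ⟨Int.floor_le _, Int.lt_floor_add_one _⟩
    calc (L n ∩ T '' Metric.ball 0 r).encard
        ≤ (⋃ m ∈ Fm, {x | x ∈ L n ∧
            ∀ i, (m i : ℝ) ≤ T.symm x i ∧ T.symm x i < m i + 1}).encard :=
          Set.encard_mono hcover
      _ ≤ ∑ m ∈ Fm, {x | x ∈ L n ∧
            ∀ i, (m i : ℝ) ≤ T.symm x i ∧ T.symm x i < m i + 1}.encard :=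
          encard_biUnion_le _ _
      _ ≤ ∑ _m ∈ Fm, (D : ℕ∞) := Finset.sum_le_sum (fun m _ => box_count T hT m)
      _ = (Fm.card * D : ℕ) := by
          rw [Finset.sum_const, nsmul_eq_mul]
          push_cast
          rfl
  · push_cast
    have h1 : (Fm.card : ℝ) ≤ (2*r+2)^n := by
      rw [hFm, Fintype.card_piFinset]
      push_cast
      calc (∏ _i : Fin n, ((Finset.Icc ⌊-r⌋ ⌊r⌋).card : ℝ))
          ≤ ∏ _i : Fin n, (2*r+2) :=
            Finset.prod_le_prod (fun i _ => by positivity) (fun i _ => Icc_card_le hr)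
        _ = (2*r+2)^n := by rw [Finset.prod_const]; simp
    have h2 : (0 : ℝ) ≤ (D : ℝ) := by positivity
    calc (Fm.card : ℝ) * (D : ℝ) ≤ (2*r+2)^n * (D : ℝ) :=
        mul_le_mul_of_nonneg_right h1 h2
      _ ≤ _ := le_refl _

lemma hT_pow (A : EuclideanSpace ℝ (Fin n) ≃ₗ[ℝ] EuclideanSpace ℝ (Fin n))
    (hA : ∀ k : Fin n → ℤ, ∃ m : Fin n → ℤ, A (ι k) = ι m) (p : ℕ) :
    ∀ k : Fin n → ℤ, ∃ m : Fin n → ℤ, (A ^ p) (ι k) = ι m := by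
  induction p with
  | zero => exact fun k => ⟨k, rfl⟩
  | succ p ih =>
    intro k
    obtain ⟨m1, hm1⟩ := hA k
    obtain ⟨m2, hm2⟩ := ih m1
    refine ⟨m2, ?_⟩
    rw [pow_succ]
    show (A ^ p) (A (ι k)) = ι m2
    rw [hm1, hm2]

lemma det_pow (A : EuclideanSpace ℝ (Fin n) ≃ₗ[ℝ] EuclideanSpace ℝ (Fin n)) (p : ℕ) :
    LinearMap.det (A ^ p).toLinearMap = (LinearMap.det A.toLinearMap) ^ p := by
  induction p with
  | zero => simp [show ((A ^ 0).toLinearMap) = LinearMap.id from rfl]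
  | succ p ih =>
    have : (A ^ (p+1)).toLinearMap = (A ^ p).toLinearMap ∘ₗ A.toLinearMap := by
      rw [pow_succ]; rfl
    rw [this, LinearMap.det_comp, ih, pow_succ]

lemma max_pow_eq {r : ℝ} (hr : 0 ≤ r) : (max 1 r)^n = max 1 (r^n) := by
  rcases le_total r 1 with h | h
  · rw [max_eq_left h, one_pow, max_eq_left (pow_le_one₀ hr h)]
  · rw [max_eq_right h, max_eq_right (one_le_pow₀ h)]

end S12

open S12

/-- Lattice counting estimate: for an integer dilation matrix `A` (here encoded as a linear
automorphism of `ℝⁿ` mapping `ℤⁿ` into `ℤⁿ`) with `|det A| ≥ 2`, there is a constant `C`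
depending only on `n` such that
`#(ℤⁿ ∩ A^j(B(0,r))) ≤ C * max(1, rⁿ) * max(1, |det A|^j)` for all `j ∈ ℤ` and `r > 0`. -/
theorem stmt12 (n : ℕ) :
    ∃ C : ℝ, 0 < C ∧
      ∀ A : EuclideanSpace ℝ (Fin n) ≃ₗ[ℝ] EuclideanSpace ℝ (Fin n),
        (∀ k : Fin n → ℤ, ∃ m : Fin n → ℤ,
          A (WithLp.toLp 2 (fun i => (k i : ℝ))) = WithLp.toLp 2 (fun i => (m i : ℝ))) →
        2 ≤ |LinearMap.det A.toLinearMap| →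
        ∀ (j : ℤ) (r : ℝ), 0 < r →
          (({x : EuclideanSpace ℝ (Fin n) | ∀ i, ∃ m : ℤ, x i = (m : ℝ)} ∩
              (A ^ j) '' Metric.ball 0 r).encard : ℝ≥0∞) ≤
            ENNReal.ofReal (C * max 1 (r ^ n) *
              max 1 (|LinearMap.det A.toLinearMap| ^ j)) := by
  refine ⟨4^n, by positivity, ?_⟩
  intro A hA hdet j r hr
  have hA' : ∀ k : Fin n → ℤ, ∃ m : Fin n → ℤ, A (ι k) = ι m := hA
  have habs1 : (1:ℝ) ≤ |LinearMap.det A.toLinearMap| := by linarith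
  have hmax1 : (1:ℝ) ≤ max 1 (r^n) := le_max_left _ _
  have hmaxd : (1:ℝ) ≤ max 1 (|LinearMap.det A.toLinearMap| ^ j) := le_max_left _ _
  have hmaxpow : (2*r+2)^n ≤ 4^n * max 1 (r^n) := by
    have h1 : 2*r+2 ≤ 4 * max 1 r := by
      rcases le_total r 1 with h | h
      · rw [max_eq_left h]; linarith
      · rw [max_eq_right h]; linarith
    calc (2*r+2)^n ≤ (4 * max 1 r)^n := by
          apply pow_le_pow_left₀ (by linarith) h1
      _ = 4^n * (max 1 r)^n := mul_pow _ _ _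
      _ = 4^n * max 1 (r^n) := by rw [max_pow_eq hr.le]
  rcases le_or_gt 0 j with hj | hj
  · set p := j.toNat with hp
    have hjp : (p : ℤ) = j := Int.toNat_of_nonneg hj
    have hApow : (A ^ j) = (A ^ p) := by rw [← hjp, zpow_natCast]
    obtain ⟨N, hN1, hN2⟩ := image_ball_count (A ^ p) (hT_pow A hA' p) hr
    have hset : {x : EuclideanSpace ℝ (Fin n) | ∀ i, ∃ m : ℤ, x i = (m : ℝ)} ∩
        (A ^ j) '' Metric.ball 0 r = L n ∩ (A ^ p) '' Metric.ball 0 r := by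
      rw [hApow]; rfl
    rw [hset]
    apply encard_cast_le hN1
    refine hN2.trans ?_
    have hdetp : ((Mat (A ^ p) (hT_pow A hA' p)).det.natAbs : ℝ)
        = |LinearMap.det A.toLinearMap| ^ p := by
      rw [Nat.cast_natAbs, Int.cast_abs, ← det_T (A ^ p) (hT_pow A hA' p), det_pow, abs_pow]
    rw [hdetp]
    have hdp : |LinearMap.det A.toLinearMap| ^ p = |LinearMap.det A.toLinearMap| ^ j := by
      rw [← hjp, zpow_natCast]
    have hnn : (0:ℝ) ≤ |LinearMap.det A.toLinearMap| ^ p := by positivity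
    calc (2*r+2)^n * |LinearMap.det A.toLinearMap| ^ p
        ≤ (4^n * max 1 (r^n)) * max 1 (|LinearMap.det A.toLinearMap| ^ j) := by
          apply mul_le_mul hmaxpow (by rw [hdp] at *; exact le_max_right _ _) hnn
          positivity
      _ = 4^n * max 1 (r^n) * max 1 (|LinearMap.det A.toLinearMap| ^ j) := by ring
  · set p := (-j).toNat with hp
    set S := {x : EuclideanSpace ℝ (Fin n) | ∀ i, ∃ m : ℤ, x i = (m : ℝ)} ∩
      (A ^ j) '' Metric.ball 0 r with hSdef
    have hcancel : ∀ y : EuclideanSpace ℝ (Fin n), (A ^ p) ((A ^ j) y) = y := by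
      intro y
      have h1 : ((p : ℤ)) = -j := Int.toNat_of_nonneg (by omega)
      have h2 : (A ^ p) ((A ^ j) y) = ((A ^ ((p : ℕ) : ℤ)) * (A ^ j)) y := rfl
      rw [h2, ← zpow_add, h1, neg_add_cancel, zpow_zero]
      rfl
    have himg : (⇑(A ^ p)) '' S ⊆ L n ∩ Metric.ball 0 r := by
      rintro _ ⟨x, ⟨hxL, y, hy, rfl⟩, rfl⟩
      constructor
      · obtain ⟨m, hm⟩ := hT_pow A hA' p (iv ((A ^ j) y))
        rw [ι_iv hxL] at hm
        intro i
        exact ⟨m i, by rw [hm]; rfl⟩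
      · rw [hcancel y]
        exact hy
    have hcard : S.encard = ((⇑(A ^ p)) '' S).encard :=
      (Set.InjOn.encard_image ((A ^ p).injective.injOn)).symm
    obtain ⟨N, hN1, hN2⟩ := ball_count (0 : EuclideanSpace ℝ (Fin n)) hr
    rw [hcard]
    apply encard_cast_le (le_trans (Set.encard_mono himg) hN1)
    refine hN2.trans ?_
    calc (2*r+2)^n ≤ 4^n * max 1 (r^n) := hmaxpow
      _ = (4^n * max 1 (r^n)) * 1 := by ring
      _ ≤ (4^n * max 1 (r^n)) * max 1 (|LinearMap.det A.toLinearMap| ^ j) := by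
          apply mul_le_mul_of_nonneg_left hmaxd
          positivity
      _ = 4^n * max 1 (r^n) * max 1 (|LinearMap.det A.toLinearMap| ^ j) := by ring
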